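/- Let H be a group with trivial center and let G = H × ℤ. Then for every automorphism α of G there exist an automorphism σ of H, a group homomorphism n : H → ℤ, and a sign ε ∈ {1, −1} such that α(h, m) = (σ(h), n(h) + ε·m) for all h ∈ H and m ∈ ℤ. -/

import Mathlib

/-- If `H` is centerless and `G = H × ℤ`, then every automorphism
`α` of `G` has the form `α (h, m) = (σ h, n h + ε • m)` for an automorphism `σ` of
`H`, a homomorphism `n : H → ℤ`, and a sign `ε ∈ {1, -1}`. -/
theorem mulAut_prod_int_decomposition
    {H : Type*} [Group H] (hZ : Subgroup.center H = ⊥)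
    (α : MulAut (H × Multiplicative ℤ)) :
    ∃ (σ : MulAut H) (n : H →* Multiplicative ℤ) (ε : ℤ),
      (ε = 1 ∨ ε = -1) ∧
      ∀ (h : H) (m : ℤ),
        α (h, Multiplicative.ofAdd m)
          = (σ h, n h * Multiplicative.ofAdd (ε * m)) := by
  -- Every automorphism sends `(1, x)` to an element with trivial first component.
  have key : ∀ (β : MulAut (H × Multiplicative ℤ)) (x : Multiplicative ℤ),
      (β (1, x)).1 = 1 := by
    intro β x
    have hmem : β (1, x) ∈ Subgroup.center (H × Multiplicative ℤ) := by
      rw [Subgroup.mem_center_iff]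
      intro g
      calc g * β (1, x) = β (β.symm g * (1, x)) := by
            rw [map_mul, MulEquiv.apply_symm_apply]
        _ = β ((1, x) * β.symm g) := by
            congr 1
            ext
            · simp
            · exact mul_comm (β.symm g).2 x
        _ = β (1, x) * g := by rw [map_mul, MulEquiv.apply_symm_apply]
    have h1 : (β (1, x)).1 ∈ Subgroup.center H := by
      rw [Subgroup.mem_center_iff] at hmem ⊢
      intro a
      have := hmem (a, 1)
      exact congrArg Prod.fst this
    rw [hZ] at h1
    exact h1
  -- the map on the second factor
  set f : ℤ → ℤ := fun m => Multiplicative.toAdd (α (1, Multiplicative.ofAdd m)).2 with hf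
  set g : ℤ → ℤ := fun m => Multiplicative.toAdd (α.symm (1, Multiplicative.ofAdd m)).2 with hg
  have hfc : ∀ m : ℤ, α (1, Multiplicative.ofAdd m) = (1, Multiplicative.ofAdd (f m)) := by
    intro m
    ext
    · exact key α _
    · simp [hf]
  have hgc : ∀ m : ℤ, α.symm (1, Multiplicative.ofAdd m) = (1, Multiplicative.ofAdd (g m)) := by
    intro m
    ext
    · exact key α.symm _
    · simp [hg]
  have hfadd : ∀ a b : ℤ, f (a + b) = f a + f b := by
    intro a b
    have : α (1, Multiplicative.ofAdd (a + b))
        = α (1, Multiplicative.ofAdd a) * α (1, Multiplicative.ofAdd b) := by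
      rw [← map_mul]
      congr 1
      ext
      · simp
      · simp [← ofAdd_add]
    rw [hfc, hfc, hfc] at this
    have := congrArg Prod.snd this
    simpa [← ofAdd_add, Multiplicative.ofAdd.injective.eq_iff] using this
  have hf0 : f 0 = 0 := by
    have : f (0 + 0) = f 0 + f 0 := hfadd 0 0
    simpa using this.symm
  have hflin : ∀ m : ℤ, f m = m * f 1 := by
    intro m
    induction m using Int.induction_on with
    | zero => simpa using hf0
    | succ k ih => rw [hfadd, ih]; ring
    | pred k ih =>
        have h := hfadd (-(k : ℤ) - 1) 1
        have : f (-(k:ℤ) - 1) + f 1 = f (-(k:ℤ)) := by rw [← h]; ring_nf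
        rw [ih] at this
        linarith
  have hgf : ∀ m : ℤ, g (f m) = m := by
    intro m
    have : α.symm (α (1, Multiplicative.ofAdd m)) = (1, Multiplicative.ofAdd m) :=
      α.symm_apply_apply _
    rw [hfc, hgc] at this
    have := congrArg Prod.snd this
    simpa using this
  have hglin : ∀ a b : ℤ, g (a + b) = g a + g b := by
    intro a b
    have : α.symm (1, Multiplicative.ofAdd (a + b))
        = α.symm (1, Multiplicative.ofAdd a) * α.symm (1, Multiplicative.ofAdd b) := by
      rw [← map_mul]
      congr 1
      ext
      · simp
      · simp [← ofAdd_add]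
    rw [hgc, hgc, hgc] at this
    have := congrArg Prod.snd this
    simpa [← ofAdd_add, Multiplicative.ofAdd.injective.eq_iff] using this
  have hg0 : g 0 = 0 := by
    have : g (0 + 0) = g 0 + g 0 := hglin 0 0
    simpa using this.symm
  have hgl : ∀ m : ℤ, g m = m * g 1 := by
    intro m
    induction m using Int.induction_on with
    | zero => simpa using hg0
    | succ k ih => rw [hglin, ih]; ring
    | pred k ih =>
        have h := hglin (-(k : ℤ) - 1) 1
        have : g (-(k:ℤ) - 1) + g 1 = g (-(k:ℤ)) := by rw [← h]; ring_nf
        rw [ih] at this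
        linarith
  -- f 1 is a unit
  have hunit : f 1 * g 1 = 1 := by
    have := hgf 1
    rw [hgl (f 1)] at this
    linarith
  have hsign : f 1 = 1 ∨ f 1 = -1 := Int.eq_one_or_neg_one_of_mul_eq_one hunit
  -- the automorphism σ of H
  have sigma_tau : ∀ (β : MulAut (H × Multiplicative ℤ)) (h : H),
      (β.symm ((β (h, 1)).1, 1)).1 = h := by
    intro β h
    have h1 : ((β (h,1)).1, (1 : Multiplicative ℤ)) * (1, (β (h,1)).2) = β (h,1) := by
      ext <;> simp
    have h2 : β.symm (((β (h,1)).1, (1:Multiplicative ℤ)) * (1, (β (h,1)).2)) = (h, 1) := by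
      rw [h1, MulEquiv.symm_apply_apply]
    rw [map_mul] at h2
    have h3 := congrArg Prod.fst h2
    simpa [key β.symm] using h3
  refine ⟨{ toFun := fun h => (α (h,1)).1,
            invFun := fun h => (α.symm (h,1)).1,
            left_inv := fun h => sigma_tau α h,
            right_inv := fun h => by simpa using sigma_tau α.symm h,
            map_mul' := fun a b => by
              show (α (a*b, 1)).1 = (α (a,1)).1 * (α (b,1)).1
              rw [show ((a*b : H), (1:Multiplicative ℤ)) = (a,1)*(b,1) from by ext <;> simp,
                map_mul]
              rfl },
          (MonoidHom.snd H (Multiplicative ℤ)).comp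
            (α.toMonoidHom.comp (MonoidHom.inl H (Multiplicative ℤ))),
          f 1, hsign, ?_⟩
  intro h m
  have hsplit : ((h : H), Multiplicative.ofAdd m) = (h, 1) * (1, Multiplicative.ofAdd m) := by
    ext <;> simp
  rw [hsplit, map_mul, hfc]
  ext
  · simp
  · simp only [Prod.snd_mul]
    rw [hflin m]
    simp [mul_comm]
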